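/- For a repeater chain of N+2 nodes spanning total length L > 0 with segment lengths ℓ₀, ..., ℓ_N > 0 summing to L, where link i succeeds each round with probability pᵢ = 10^{-(α/10)·ℓᵢ} (α > 0), the product of success probabilities ∏ᵢ pᵢ = 10^{-(α/10)·L} is independent of the partition, and the expected number of rounds E[max(X₁,...,X_{N+1})] with Xᵢ ~ geom(pᵢ) independent is minimized when all ℓᵢ = L/(N+1). -/

import Mathlib

open Real Finset

/-- Weierstrass product inequality: `1 - ∑ xᵢ ≤ ∏ (1 - xᵢ)` for `xᵢ ∈ [0,1]`. -/
private lemma weier {ι : Type*} (s : Finset ι) (x : ι → ℝ) (h0 : ∀ i ∈ s, 0 ≤ x i)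
    (h1 : ∀ i ∈ s, x i ≤ 1) : 1 - ∑ i ∈ s, x i ≤ ∏ i ∈ s, (1 - x i) := by
  induction s using Finset.cons_induction with
  | empty => simp
  | cons a s ha ih =>
    rw [Finset.prod_cons, Finset.sum_cons]
    have h0a := h0 a (Finset.mem_cons_self a s)
    have hP0 : 0 ≤ ∏ i ∈ s, (1 - x i) :=
      Finset.prod_nonneg fun i hi => by
        have := h1 i (Finset.mem_cons_of_mem hi); linarith
    have hP1 : ∏ i ∈ s, (1 - x i) ≤ 1 :=
      Finset.prod_le_one (fun i hi => by
        have := h1 i (Finset.mem_cons_of_mem hi); linarith)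
        (fun i hi => by have := h0 i (Finset.mem_cons_of_mem hi); linarith)
    have hih := ih (fun i hi => h0 i (Finset.mem_cons_of_mem hi))
      (fun i hi => h1 i (Finset.mem_cons_of_mem hi))
    nlinarith [hih, h0a, hP1]

private lemma hasDerivAt_g (k : ℕ) (hk : k ≠ 0) {t : ℝ} (ht : 0 < t) :
    HasDerivAt (fun t => Real.log (1 - (1 - Real.exp (-t)) ^ k))
      (-((k : ℝ) * (1 - Real.exp (-t)) ^ (k - 1) * Real.exp (-t)) /
        (1 - (1 - Real.exp (-t)) ^ k)) t := by
  have he1 : Real.exp (-t) < 1 := Real.exp_lt_one_iff.2 (by linarith)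
  have he0 : 0 < Real.exp (-t) := Real.exp_pos _
  have hu0 : 0 ≤ 1 - Real.exp (-t) := by linarith
  have hu1 : 1 - Real.exp (-t) < 1 := by linarith
  have hpos : 0 < 1 - (1 - Real.exp (-t)) ^ k := by
    have := pow_lt_one₀ hu0 hu1 hk; linarith
  have h1 : HasDerivAt (fun s : ℝ => -s) (-1) t := (hasDerivAt_id t).neg
  have h2 : HasDerivAt (fun s : ℝ => Real.exp (-s)) (Real.exp (-t) * -1) t :=
    (Real.hasDerivAt_exp (-t)).comp t h1
  have h3 : HasDerivAt (fun s : ℝ => 1 - Real.exp (-s)) (Real.exp (-t)) t := by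
    exact ((hasDerivAt_const t (1 : ℝ)).sub h2).congr_deriv (by ring)
  have h4 := h3.pow k
  have h5 : HasDerivAt (fun s : ℝ => 1 - (1 - Real.exp (-s)) ^ k)
      (-((k : ℝ) * (1 - Real.exp (-t)) ^ (k - 1) * Real.exp (-t))) t := by
    exact ((hasDerivAt_const t (1 : ℝ)).sub h4).congr_deriv (by ring)
  exact h5.log (ne_of_gt hpos)

private lemma geom_fac {u : ℝ} (k : ℕ) :
    1 - u ^ k = (1 - u) * ∑ j ∈ Finset.range k, u ^ j := by
  have h := geom_sum_mul u k
  linarith [h]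

private lemma deriv_g_eq (k : ℕ) (hk : k ≠ 0) {t : ℝ} (ht : 0 < t) :
    deriv (fun t => Real.log (1 - (1 - Real.exp (-t)) ^ k)) t
      = -((k : ℝ) * (1 - Real.exp (-t)) ^ (k - 1) /
          ∑ j ∈ Finset.range k, (1 - Real.exp (-t)) ^ j) := by
  rw [(hasDerivAt_g k hk ht).deriv]
  set u := 1 - Real.exp (-t) with hu
  have he1 : Real.exp (-t) < 1 := Real.exp_lt_one_iff.2 (by linarith)
  have he0 : 0 < Real.exp (-t) := Real.exp_pos _
  have hu0 : 0 < u := by rw [hu]; linarith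
  have hS : 0 < ∑ j ∈ Finset.range k, u ^ j := by
    apply Finset.sum_pos (fun j _ => pow_pos hu0 j)
    exact Finset.nonempty_range_iff.2 hk
  have hfac : 1 - u ^ k = (1 - u) * ∑ j ∈ Finset.range k, u ^ j := geom_fac k
  have hue : Real.exp (-t) = 1 - u := by rw [hu]; ring
  rw [hfac, hue]
  have h1u : (1 : ℝ) - u ≠ 0 := by rw [← hue]; positivity
  rw [neg_div, mul_comm (1 - u), mul_div_mul_right _ _ h1u]

private lemma concave_g (k : ℕ) (hk : k ≠ 0) :
    ConcaveOn ℝ (Set.Ioi 0) (fun t => Real.log (1 - (1 - Real.exp (-t)) ^ k)) := by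
  apply AntitoneOn.concaveOn_of_deriv (convex_Ioi 0)
  · intro t ht
    exact (hasDerivAt_g k hk ht).continuousAt.continuousWithinAt
  · rw [interior_Ioi]
    intro t ht
    exact (hasDerivAt_g k hk ht).differentiableAt.differentiableWithinAt
  · rw [interior_Ioi]
    intro t₁ h₁ t₂ h₂ h12
    rw [deriv_g_eq k hk h₁, deriv_g_eq k hk h₂]
    set u₁ := 1 - Real.exp (-t₁) with hu₁
    set u₂ := 1 - Real.exp (-t₂) with hu₂
    have he1 : Real.exp (-t₁) < 1 := Real.exp_lt_one_iff.2 (by simp at h₁ ⊢; linarith)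
    have he2 : Real.exp (-t₂) ≤ Real.exp (-t₁) := Real.exp_le_exp.2 (by linarith)
    have hu10 : 0 < u₁ := by rw [hu₁]; linarith
    have hu12 : u₁ ≤ u₂ := by rw [hu₁, hu₂]; linarith
    have hu20 : 0 < u₂ := lt_of_lt_of_le hu10 hu12
    have hS1 : 0 < ∑ j ∈ Finset.range k, u₁ ^ j :=
      Finset.sum_pos (fun j _ => pow_pos hu10 j) (Finset.nonempty_range_iff.2 hk)
    have hS2 : 0 < ∑ j ∈ Finset.range k, u₂ ^ j :=
      Finset.sum_pos (fun j _ => pow_pos hu20 j) (Finset.nonempty_range_iff.2 hk)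
    rw [neg_le_neg_iff, div_le_div_iff₀ hS1 hS2]
    rw [Finset.mul_sum, Finset.mul_sum]
    apply Finset.sum_le_sum
    intro j hj
    have hjk : j ≤ k - 1 := Nat.le_pred_of_lt (Finset.mem_range.1 hj)
    have hsplit : k - 1 = j + (k - 1 - j) := (Nat.add_sub_cancel' hjk).symm
    have key : u₁ ^ (k - 1 - j) ≤ u₂ ^ (k - 1 - j) := pow_le_pow_left₀ hu10.le hu12 _
    have hpow1 : u₁ ^ (k - 1) = u₁ ^ j * u₁ ^ (k - 1 - j) := by
      rw [← pow_add, ← hsplit]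
    have hpow2 : u₂ ^ (k - 1) = u₂ ^ j * u₂ ^ (k - 1 - j) := by
      rw [← pow_add, ← hsplit]
    calc (k : ℝ) * u₁ ^ (k - 1) * u₂ ^ j
        = (k : ℝ) * (u₁ ^ j * u₂ ^ j) * u₁ ^ (k - 1 - j) := by
          rw [hpow1]; ring
      _ ≤ (k : ℝ) * (u₁ ^ j * u₂ ^ j) * u₂ ^ (k - 1 - j) := by
          apply mul_le_mul_of_nonneg_left key; positivity
      _ = (k : ℝ) * u₂ ^ (k - 1) * u₁ ^ j := by
          rw [hpow2]; ring

/-- Key per-round inequality: with fixed product of success probabilities, the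
product `∏ (1 - (1-pᵢ)^k)` is maximized at the homogeneous point. -/
private lemma key_ineq (N : ℕ) (k : ℕ) (t : Fin (N + 1) → ℝ) (ht : ∀ i, 0 < t i) :
    ∏ i, (1 - (1 - Real.exp (-t i)) ^ k)
      ≤ (1 - (1 - Real.exp (-((∑ i, t i) / (N + 1)))) ^ k) ^ (N + 1) := by
  rcases Nat.eq_zero_or_pos k with rfl | hk
  · simp
  have hk' : k ≠ 0 := hk.ne'
  set g : ℝ → ℝ := fun t => Real.log (1 - (1 - Real.exp (-t)) ^ k) with hg
  have hn : (0 : ℝ) < (N : ℝ) + 1 := by positivity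
  set tb : ℝ := (∑ i, t i) / (N + 1) with htb
  have htb0 : 0 < tb := by
    apply div_pos _ hn
    exact Finset.sum_pos (fun i _ => ht i) Finset.univ_nonempty
  -- positivity of 1 - (1-e^{-s})^k for s > 0
  have hfpos : ∀ s : ℝ, 0 < s → 0 < 1 - (1 - Real.exp (-s)) ^ k := by
    intro s hs
    have he1 : Real.exp (-s) < 1 := Real.exp_lt_one_iff.2 (by linarith)
    have he0 : 0 < Real.exp (-s) := Real.exp_pos _
    have := pow_lt_one₀ (by linarith : (0:ℝ) ≤ 1 - Real.exp (-s)) (by linarith) hk'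
    linarith
  -- Jensen
  have hjen := (concave_g k hk').le_map_sum (t := Finset.univ)
    (w := fun _ : Fin (N + 1) => 1 / ((N : ℝ) + 1)) (p := t)
    (fun i _ => by positivity)
    (by
      rw [Finset.sum_const, Finset.card_univ, Fintype.card_fin, nsmul_eq_mul]
      push_cast
      field_simp)
    (fun i _ => Set.mem_Ioi.2 (ht i))
  simp only [smul_eq_mul] at hjen
  have harg : ∑ i, 1 / ((N : ℝ) + 1) * t i = tb := by
    rw [← Finset.mul_sum, htb]; ring
  rw [harg] at hjen
  have hsum_le : ∑ i, g (t i) ≤ ((N : ℝ) + 1) * g tb := by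
    have h2 : ∑ i, 1 / ((N : ℝ) + 1) * g (t i) = (1 / ((N : ℝ) + 1)) * ∑ i, g (t i) := by
      rw [Finset.mul_sum]
    rw [h2] at hjen
    calc ∑ i, g (t i) = ((N : ℝ) + 1) * ((1 / ((N : ℝ) + 1)) * ∑ i, g (t i)) := by
          field_simp
      _ ≤ ((N : ℝ) + 1) * g tb := by
          exact mul_le_mul_of_nonneg_left hjen hn.le
  -- exponentiate
  have hexp : ∀ s : ℝ, 0 < s → Real.exp (g s) = 1 - (1 - Real.exp (-s)) ^ k := by
    intro s hs
    exact Real.exp_log (hfpos s hs)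
  calc ∏ i, (1 - (1 - Real.exp (-t i)) ^ k)
      = ∏ i, Real.exp (g (t i)) := by
        apply Finset.prod_congr rfl
        intro i _
        rw [hexp (t i) (ht i)]
    _ = Real.exp (∑ i, g (t i)) := (Real.exp_sum _ _).symm
    _ ≤ Real.exp (((N : ℝ) + 1) * g tb) := Real.exp_le_exp.2 hsum_le
    _ = (1 - (1 - Real.exp (-tb)) ^ k) ^ (N + 1) := by
        rw [show ((N : ℝ) + 1) = ((N + 1 : ℕ) : ℝ) by push_cast; ring,
          Real.exp_nat_mul, hexp tb htb0]

theorem rate_optimal_for_hom_chain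
    {N : ℕ} (α L : ℝ) (hα : 0 < α) (hL : 0 < L)
    (ℓ : Fin (N + 1) → ℝ) (hℓ : ∀ i, 0 < ℓ i) (hsum : ∑ i, ℓ i = L)
    (p : Fin (N + 1) → ℝ) (hp : ∀ i, p i = (10 : ℝ) ^ (-(α / 10) * ℓ i)) :
    (∏ i, p i = (10 : ℝ) ^ (-(α / 10) * L)) ∧
    (∑' k : ℕ, (1 - (1 - (1 - (10 : ℝ) ^ (-(α / 10) * (L / (N + 1)))) ^ k) ^ (N + 1))
        ≤ ∑' k : ℕ, (1 - ∏ i, (1 - (1 - p i) ^ k))) := by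
  have hlog10 : 0 < Real.log 10 := Real.log_pos (by norm_num)
  set c : ℝ := α / 10 * Real.log 10 with hc
  have hc0 : 0 < c := by positivity
  set t : Fin (N + 1) → ℝ := fun i => c * ℓ i with htdef
  have ht : ∀ i, 0 < t i := fun i => mul_pos hc0 (hℓ i)
  have hpe : ∀ i, p i = Real.exp (-t i) := by
    intro i
    rw [hp i, Real.rpow_def_of_pos (by norm_num : (0:ℝ) < 10)]
    congr 1
    rw [htdef]; ring
  have htsum : ∑ i, t i = c * L := by
    rw [htdef, ← Finset.mul_sum, hsum]
  have hn : (0 : ℝ) < (N : ℝ) + 1 := by positivity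
  set q : ℝ := (10 : ℝ) ^ (-(α / 10) * (L / (N + 1))) with hq
  have hqe : q = Real.exp (-((∑ i, t i) / (N + 1))) := by
    rw [hq, Real.rpow_def_of_pos (by norm_num : (0:ℝ) < 10), htsum]
    congr 1
    rw [hc]; field_simp
  have hq0 : 0 < q := by rw [hqe]; exact Real.exp_pos _
  have hq1 : q < 1 := by
    rw [hqe]
    apply Real.exp_lt_one_iff.2
    have : 0 < (∑ i, t i) / ((N : ℝ) + 1) := by
      rw [htsum]; positivity
    linarith
  have hp0 : ∀ i, 0 < p i := fun i => by rw [hpe i]; exact Real.exp_pos _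
  have hp1 : ∀ i, p i < 1 := fun i => by
    rw [hpe i]
    exact Real.exp_lt_one_iff.2 (by linarith [ht i])
  constructor
  · -- product identity
    calc ∏ i, p i = ∏ i, Real.exp (-t i) := Finset.prod_congr rfl (fun i _ => hpe i)
      _ = Real.exp (∑ i, -t i) := (Real.exp_sum _ _).symm
      _ = Real.exp (-(c * L)) := by rw [← htsum, Finset.sum_neg_distrib]
      _ = (10 : ℝ) ^ (-(α / 10) * L) := by
          rw [Real.rpow_def_of_pos (by norm_num : (0:ℝ) < 10)]
          congr 1
          rw [hc]; ring
  · -- tsum inequality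
    -- termwise inequality
    have hterm : ∀ k : ℕ,
        (1 - (1 - (1 - q) ^ k) ^ (N + 1)) ≤ 1 - ∏ i, (1 - (1 - p i) ^ k) := by
      intro k
      apply sub_le_sub_left
      have := key_ineq N k t ht
      calc ∏ i, (1 - (1 - p i) ^ k)
          = ∏ i, (1 - (1 - Real.exp (-t i)) ^ k) :=
            Finset.prod_congr rfl (fun i _ => by rw [hpe i])
        _ ≤ (1 - (1 - Real.exp (-((∑ i, t i) / (N + 1)))) ^ k) ^ (N + 1) := this
        _ = (1 - (1 - q) ^ k) ^ (N + 1) := by rw [hqe]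
    -- summability of LHS
    have hgeoq : Summable fun k : ℕ => ((N : ℝ) + 1) * (1 - q) ^ k :=
      (summable_geometric_of_lt_one (by linarith) (by linarith)).mul_left _
    have hsumL : Summable fun k : ℕ => (1 - (1 - (1 - q) ^ k) ^ (N + 1)) := by
      apply Summable.of_nonneg_of_le _ _ hgeoq
      · intro k
        have h1 : (1 - q) ^ k ≤ 1 := pow_le_one₀ (by linarith) (by linarith)
        have h2 : 0 ≤ (1 - q) ^ k := pow_nonneg (by linarith) _
        have : (1 - (1 - q) ^ k) ^ (N + 1) ≤ 1 :=
          pow_le_one₀ (by linarith) (by linarith)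
        linarith
      · intro k
        have h1 : (1 - q) ^ k ≤ 1 := pow_le_one₀ (by linarith) (by linarith)
        have h2 : 0 ≤ (1 - q) ^ k := pow_nonneg (by linarith) _
        have h3 : 1 + ((N : ℝ) + 1) * (-(1 - q) ^ k) ≤ (1 + (-(1 - q) ^ k)) ^ (N + 1) := by
          have := one_add_mul_le_pow (a := -(1 - q) ^ k) (by linarith) (N + 1)
          exact_mod_cast this
        have h4 : (1 + -(1 - q) ^ k) = 1 - (1 - q) ^ k := by ring
        rw [h4] at h3
        linarith
    -- summability of RHS
    have hsumR : Summable fun k : ℕ => (1 - ∏ i, (1 - (1 - p i) ^ k)) := by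
      have hbnd : ∀ k : ℕ, (1 - ∏ i, (1 - (1 - p i) ^ k)) ≤ ∑ i, (1 - p i) ^ k := by
        intro k
        have := weier Finset.univ (fun i => (1 - p i) ^ k)
          (fun i _ => pow_nonneg (by linarith [hp1 i]) _)
          (fun i _ => pow_le_one₀ (by linarith [hp1 i]) (by linarith [hp0 i]))
        linarith
      apply Summable.of_nonneg_of_le _ hbnd
        (summable_sum (fun i _ =>
          summable_geometric_of_lt_one (by linarith [hp1 i]) (by linarith [hp0 i])))
      intro k
      have : ∏ i, (1 - (1 - p i) ^ k) ≤ 1 :=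
        Finset.prod_le_one
          (fun i _ => by
            have := pow_le_one₀ (by linarith [hp1 i] : (0:ℝ) ≤ 1 - p i)
              (by linarith [hp0 i] : (1:ℝ) - p i ≤ 1) (n := k)
            linarith)
          (fun i _ => by
            have := pow_nonneg (by linarith [hp1 i] : (0:ℝ) ≤ 1 - p i) k
            linarith)
      linarith
    exact Summable.tsum_le_tsum hterm hsumL hsumR
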